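/- Let n be a positive integer and ξ a complex non-real algebraic number of degree greater than n. For μ ∈ ℂ*, let V_n(μ,ξ) be the ℚ-vector space of polynomials f ∈ ℚ[X] of degree at most n with μ·f(ξ) ∈ ℝ. If μ₀, μ ∈ ℂ* both satisfy dim V_n(μ₀,ξ) > (n+1)/2 and dim V_n(μ,ξ) > (n+1)/2, then V_n(μ,ξ) = V_n(μ₀,ξ). -/
import Mathlib


open Polynomial

/-- The ℚ-vector space of polynomials `f ∈ ℚ[X]` of degree at most `n`
with `μ * f(ξ) ∈ ℝ`. -/
noncomputable def Vspace (n : ℕ) (μ ξ : ℂ) : Submodule ℚ ℚ[X] where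
  carrier := {f | f.natDegree ≤ n ∧ ∃ r : ℝ, μ * aeval ξ f = (r : ℂ)}
  zero_mem' := ⟨by simp, 0, by simp⟩
  add_mem' := by
    rintro f g ⟨hf, r, hr⟩ ⟨hg, s, hs⟩
    refine ⟨(natDegree_add_le f g).trans (by simp [hf, hg]), r + s, ?_⟩
    push_cast
    rw [map_add, mul_add, hr, hs]
  smul_mem' := by
    rintro c f ⟨hf, r, hr⟩
    refine ⟨(natDegree_smul_le c f).trans hf, c * r, ?_⟩
    rw [map_smul, Algebra.mul_smul_comm, hr, Rat.smul_def]
    push_cast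
    ring

/-- `t_n(ξ)`: the maximum over nonzero `μ ∈ ℂ` of `dim_ℚ V_n(μ,ξ)`. -/
noncomputable def tdeg (n : ℕ) (ξ : ℂ) : ℕ :=
  sSup {d : ℕ | ∃ μ : ℂ, μ ≠ 0 ∧ d = Module.finrank ℚ (Vspace n μ ξ)}

theorem uniqueness_of_maximal_Vspace (n : ℕ) (hn : 0 < n) (ξ : ℂ)
    (hξreal : ξ.im ≠ 0) (hξalg : IsAlgebraic ℚ ξ)
    (hdeg : n < (minpoly ℚ ξ).natDegree)
    (μ₀ μ : ℂ) (hμ₀ : μ₀ ≠ 0) (hμ : μ ≠ 0)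
    (h₀ : n + 1 < 2 * Module.finrank ℚ (Vspace n μ₀ ξ))
    (h : n + 1 < 2 * Module.finrank ℚ (Vspace n μ ξ)) :
    Vspace n μ ξ = Vspace n μ₀ ξ := by
  -- Both spaces sit inside degreeLT ℚ (n+1)
  have hsub : ∀ ν : ℂ, Vspace n ν ξ ≤ degreeLT ℚ (n + 1) := by
    intro ν f hf
    rw [mem_degreeLT]
    calc f.degree ≤ (f.natDegree : WithBot ℕ) := degree_le_natDegree
      _ < ((n + 1 : ℕ) : WithBot ℕ) := by exact_mod_cast Nat.lt_succ_of_le hf.1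
  have hfd : FiniteDimensional ℚ (degreeLT ℚ (n + 1)) :=
    Module.Finite.equiv (degreeLTEquiv ℚ (n + 1)).symm
  have hfin : Module.finrank ℚ (degreeLT ℚ (n + 1)) = n + 1 := by
    rw [LinearEquiv.finrank_eq (degreeLTEquiv ℚ (n + 1))]
    simp
  have fd₀ : FiniteDimensional ℚ (Vspace n μ₀ ξ) :=
    Submodule.finiteDimensional_of_le (hsub μ₀)
  have fd₁ : FiniteDimensional ℚ (Vspace n μ ξ) :=
    Submodule.finiteDimensional_of_le (hsub μ)
  have hsup : Module.finrank ℚ ↥(Vspace n μ ξ ⊔ Vspace n μ₀ ξ) ≤ n + 1 := by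
    rw [← hfin]
    exact Submodule.finrank_mono (sup_le (hsub μ) (hsub μ₀))
  have hdim := Submodule.finrank_sup_add_finrank_inf_eq (Vspace n μ ξ) (Vspace n μ₀ ξ)
  have hinf : 0 < Module.finrank ℚ ↥(Vspace n μ ξ ⊓ Vspace n μ₀ ξ) := by omega
  have hne : (Vspace n μ ξ ⊓ Vspace n μ₀ ξ) ≠ ⊥ := by
    intro hbot
    rw [hbot, finrank_bot] at hinf
    exact lt_irrefl 0 hinf
  obtain ⟨f, hfmem, hf0⟩ := Submodule.exists_mem_ne_zero_of_ne_bot hne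
  obtain ⟨⟨hfdeg, r, hr⟩, ⟨_, s, hs⟩⟩ := hfmem
  -- f(ξ) ≠ 0
  have hfξ : aeval ξ f ≠ 0 := by
    intro hz
    have hdvd : minpoly ℚ ξ ∣ f := minpoly.dvd ℚ ξ hz
    have := Polynomial.natDegree_le_of_dvd hdvd hf0
    omega
  have hr0 : (r : ℂ) ≠ 0 := by rw [← hr]; exact mul_ne_zero hμ hfξ
  have hs0 : (s : ℂ) ≠ 0 := by rw [← hs]; exact mul_ne_zero hμ₀ hfξ
  -- μ = (r/s) • μ₀
  have key : μ * (s : ℂ) = (r : ℂ) * μ₀ := by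
    apply mul_right_cancel₀ hfξ
    calc μ * (s : ℂ) * aeval ξ f = μ * aeval ξ f * s := by ring
      _ = (r : ℂ) * s := by rw [hr]
      _ = (r : ℂ) * (μ₀ * aeval ξ f) := by rw [hs]
      _ = (r : ℂ) * μ₀ * aeval ξ f := by ring
  have hμμ₀ : μ = ((r / s : ℝ) : ℂ) * μ₀ := by
    rw [Complex.ofReal_div, div_mul_eq_mul_div, eq_div_iff hs0]
    linear_combination key
  have hrs0 : (r / s : ℝ) ≠ 0 := by
    have hrr : r ≠ 0 := by exact_mod_cast hr0
    have hss : s ≠ 0 := by exact_mod_cast hs0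
    exact div_ne_zero hrr hss
  ext g
  constructor
  · rintro ⟨hg, u, hu⟩
    refine ⟨hg, u / (r / s), ?_⟩
    rw [hμμ₀] at hu
    push_cast
    rw [eq_div_iff (by exact_mod_cast hrs0), ← hu]
    push_cast
    ring
  · rintro ⟨hg, u, hu⟩
    refine ⟨hg, (r / s) * u, ?_⟩
    rw [hμμ₀, mul_assoc, hu]
    push_cast
    ring
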